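/- Let A ⊆ B be an extension of commutative integral domains such that B is integral over A and A is integrally closed. Let q be a prime ideal of B and let p = q ∩ A. If the residue field κ(q) is generated by a single element as a field extension of κ(p), then κ(q) is a finite extension of κ(p) and [κ(q) : κ(p)] ≤ [K(B) : K(A)], an inequality of vector-space dimensions in which the right-hand side may be infinite. -/

import Mathlib

noncomputable section

open Ideal

universe u v

/-- The field embedding `K(A) →+* K(B)` between fraction fields induced by an injective ring
homomorphism between integral domains. -/
def RingHom.fracMap {A : Type u} {B : Type v} [CommRing A] [IsDomain A] [CommRing B]
    [IsDomain B] (f : A →+* B) (hf : Function.Injective f) :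
    FractionRing A →+* FractionRing B :=
  IsFractionRing.lift (g := (algebraMap B (FractionRing B)).comp f)
    ((IsFractionRing.injective B (FractionRing B)).comp hf)

/-- `[K(B) : K(A)]` as a cardinal, for an injective ring hom `f : A →+* B` of domains. -/
def fracRank {A : Type u} {B : Type v} [CommRing A] [IsDomain A] [CommRing B] [IsDomain B]
    (f : A →+* B) (hf : Function.Injective f) : Cardinal.{v} :=
  letI := (f.fracMap hf).toAlgebra
  Module.rank (FractionRing A) (FractionRing B)

/-- `[K(B) : K(A)]` as a natural number (zero if infinite). -/
def fracFinrank {A : Type u} {B : Type v} [CommRing A] [IsDomain A] [CommRing B] [IsDomain B]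
    (f : A →+* B) (hf : Function.Injective f) : ℕ :=
  letI := (f.fracMap hf).toAlgebra
  Module.finrank (FractionRing A) (FractionRing B)

/-- `K(B)/K(A)` is a finite extension. -/
def FracFinite {A : Type u} {B : Type v} [CommRing A] [IsDomain A] [CommRing B] [IsDomain B]
    (f : A →+* B) (hf : Function.Injective f) : Prop :=
  letI := (f.fracMap hf).toAlgebra
  Module.Finite (FractionRing A) (FractionRing B)

/-- The canonical embedding of residue fields `κ(p) →+* κ(q)` for a prime `q` of `B` lying
over `p = q ∩ A`, where `κ(q)` is the fraction field of `B ⧸ q`. -/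
def residueMap (A : Type u) {B : Type v} [CommRing A] [CommRing B] [Algebra A B]
    (q : Ideal B) (hq : q.IsPrime) :
    FractionRing (A ⧸ q.comap (algebraMap A B)) →+* FractionRing (B ⧸ q) :=
  haveI := hq
  (Ideal.quotientMap q (algebraMap A B) le_rfl).fracMap Ideal.quotientMap_injective

/-- The field-extension structure `κ(q)/κ(p)`. -/
def residueAlgebra (A : Type u) {B : Type v} [CommRing A] [CommRing B] [Algebra A B]
    (q : Ideal B) (hq : q.IsPrime) :
    Algebra (FractionRing (A ⧸ q.comap (algebraMap A B))) (FractionRing (B ⧸ q)) :=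
  (residueMap A q hq).toAlgebra

/-- The residue degree `[κ(q) : κ(p)]` as a cardinal. -/
def residueRank (A : Type u) {B : Type v} [CommRing A] [CommRing B] [Algebra A B]
    (q : Ideal B) (hq : q.IsPrime) : Cardinal.{v} :=
  haveI := hq
  letI := residueAlgebra A q hq
  Module.rank (FractionRing (A ⧸ q.comap (algebraMap A B))) (FractionRing (B ⧸ q))

/-- The residue degree `[κ(q) : κ(p)]` as a natural number (zero if infinite). -/
def residueFinrank (A : Type u) {B : Type v} [CommRing A] [CommRing B] [Algebra A B]
    (q : Ideal B) (hq : q.IsPrime) : ℕ :=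
  haveI := hq
  letI := residueAlgebra A q hq
  Module.finrank (FractionRing (A ⧸ q.comap (algebraMap A B))) (FractionRing (B ⧸ q))

/-- `κ(q)/κ(p)` is a finite extension. -/
def ResidueFinite (A : Type u) {B : Type v} [CommRing A] [CommRing B] [Algebra A B]
    (q : Ideal B) (hq : q.IsPrime) : Prop :=
  haveI := hq
  letI := residueAlgebra A q hq
  Module.Finite (FractionRing (A ⧸ q.comap (algebraMap A B))) (FractionRing (B ⧸ q))

/-- A commutative ring is a regular local ring if it is a Noetherian local ring in which the
minimal number of generators of the maximal ideal equals the Krull dimension. -/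
def IsRegularLocal (R : Type u) [CommRing R] : Prop :=
  IsNoetherianRing R ∧ ∃ h : IsLocalRing R,
    (↑(sInf {n : ℕ | ∃ s : Finset R, s.card = n ∧
        Ideal.span (s : Set R) = @IsLocalRing.maximalIdeal R _ h}) : WithBot ℕ∞) = ringKrullDim R

set_option maxHeartbeats 1000000

open IntermediateField Polynomial

theorem RingHom.fracMap_algebraMap {A : Type u} {B : Type v} [CommRing A] [IsDomain A]
    [CommRing B] [IsDomain B] (f : A →+* B) (hf : Function.Injective f) (x : A) :
    f.fracMap hf (algebraMap A (FractionRing A) x) = algebraMap B (FractionRing B) (f x) :=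
  IsFractionRing.lift_algebraMap _ x

theorem aux_gen {A₀ : Type*} {R : Type*} [CommRing A₀] [IsDomain A₀] [CommRing R] [IsDomain R]
    [Algebra A₀ R] [Algebra.IsIntegral A₀ R]
    (K L : Type*) [Field K] [Field L] [Algebra A₀ K] [IsFractionRing A₀ K]
    [Algebra R L] [IsFractionRing R L] [Algebra K L] [Algebra A₀ L]
    [IsScalarTower A₀ K L] [IsScalarTower A₀ R L]
    (hmono : ∃ x : L, IntermediateField.adjoin K {x} = ⊤) :
    FiniteDimensional K L ∧ ∃ r : R, IntermediateField.adjoin K {algebraMap R L r} = ⊤ := by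
  have halg : Algebra.IsAlgebraic K L := isAlgebraic_of_isFractionRing K L (R := A₀) (S := R)
  obtain ⟨x, hx⟩ := hmono
  have hxint : IsIntegral K x := (halg.isAlgebraic x).isIntegral
  have hfd : FiniteDimensional K L := by
    have := IntermediateField.adjoin.finiteDimensional hxint
    rw [hx] at this
    exact IntermediateField.topEquiv.toLinearEquiv.finiteDimensional
  refine ⟨hfd, ?_⟩
  have hfin : Finite (IntermediateField K L) :=
    (Field.exists_primitive_element_iff_finite_intermediateField K L).mp ⟨halg, x, hx⟩
  -- A subfield containing the image of `R` is everything.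
  have key : ∀ M : IntermediateField K L, (∀ r : R, algebraMap R L r ∈ M) → M = ⊤ := by
    intro M hM
    ext z
    simp only [IntermediateField.mem_top, iff_true]
    obtain ⟨r, s, -, rfl⟩ := IsFractionRing.div_surjective (A := R) z
    exact div_mem (hM r) (hM s)
  cases finite_or_infinite A₀ with
  | inl hfinA =>
      -- `A₀` finite ⇒ `K` finite ⇒ `L` finite ⇒ `R` finite field ⇒ `algebraMap R L` surjective
      have hKfin : Finite K := Finite.of_surjective _
        ((IsFractionRing.surjective_iff_isField (R := A₀) (K := K)).mpr
          (Finite.isField_of_domain A₀))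
      have hLfin : Finite L := Module.finite_of_finite K
      have hRfin : Finite R := Finite.of_injective _ (IsFractionRing.injective R L)
      have hsurj : Function.Surjective (algebraMap R L) :=
        (IsFractionRing.surjective_iff_isField (R := R) (K := L)).mpr
          (Finite.isField_of_domain R)
      obtain ⟨r, rfl⟩ := hsurj x
      exact ⟨r, hx⟩
  | inr hinfA =>
      -- choose a maximal element among `adjoin K {algebraMap R L r}`
      set S : Set (IntermediateField K L) :=
        Set.range (fun r : R => IntermediateField.adjoin K {algebraMap R L r}) with hS
    
      have hSfin : S.Finite := Set.toFinite S
      obtain ⟨M₀, hM₀S, hM₀max⟩ := Set.Finite.exists_maximal hSfin ⟨_, ⟨0, rfl⟩⟩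
      obtain ⟨r₀, hr₀'⟩ := hM₀S
      have hr₀ : IntermediateField.adjoin K {algebraMap R L r₀} = M₀ := hr₀'
      refine ⟨r₀, ?_⟩
      rw [hr₀]
      apply key
      intro y
      -- pigeonhole on `a ↦ adjoin K {algebraMap R L (algebraMap A₀ R a * r₀ + y)}`
      have : ¬ Function.Injective
          (fun a : A₀ => IntermediateField.adjoin K {algebraMap R L (algebraMap A₀ R a * r₀ + y)}) :=
        fun h => (Finite.of_injective _ h).not_infinite hinfA
      rw [Function.not_injective_iff] at this
      obtain ⟨a₁, a₂, hMeq, hne⟩ := this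
      set z₁ := algebraMap R L (algebraMap A₀ R a₁ * r₀ + y) with hz₁
      set z₂ := algebraMap R L (algebraMap A₀ R a₂ * r₀ + y) with hz₂
      set M := IntermediateField.adjoin K {z₁} with hM
      have hz₁M : z₁ ∈ M := IntermediateField.mem_adjoin_simple_self K z₁
      have hz₂M : z₂ ∈ M := by
        rw [hMeq]
        exact IntermediateField.mem_adjoin_simple_self K z₂
      have hdiff : z₁ - z₂ = algebraMap K L (algebraMap A₀ K (a₁ - a₂)) * algebraMap R L r₀ := by
        rw [← IsScalarTower.algebraMap_apply A₀ K L, IsScalarTower.algebraMap_apply A₀ R L,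
          hz₁, hz₂, ← _root_.map_sub, ← _root_.map_mul]
        congr 1
        rw [_root_.map_sub]
        ring
      have hc : algebraMap A₀ K (a₁ - a₂) ≠ 0 := by
        rw [_root_.map_sub, sub_ne_zero]
        exact fun h => hne (IsFractionRing.injective A₀ K h)
      have hr₀M : algebraMap R L r₀ ∈ M := by
        have h1 : z₁ - z₂ ∈ M := sub_mem hz₁M hz₂M
        rw [hdiff] at h1
        have h2 : algebraMap K L (algebraMap A₀ K (a₁ - a₂))⁻¹ *
            (algebraMap K L (algebraMap A₀ K (a₁ - a₂)) * algebraMap R L r₀) ∈ M :=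
          mul_mem (M.algebraMap_mem _) h1
        rwa [← mul_assoc, ← _root_.map_mul, inv_mul_cancel₀ hc, _root_.map_one, one_mul] at h2
      have hyM : algebraMap R L y ∈ M := by
        have h1 : z₁ - algebraMap K L (algebraMap A₀ K a₁) * algebraMap R L r₀ ∈ M := by
          refine sub_mem hz₁M (mul_mem ?_ hr₀M)
          exact M.algebraMap_mem _
        rwa [hz₁, _root_.map_add, _root_.map_mul, ← IsScalarTower.algebraMap_apply,
          IsScalarTower.algebraMap_apply A₀ K L, add_sub_cancel_left] at h1
      -- maximality: `M = M₀`
      have hMS : M ∈ S := ⟨_, rfl⟩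
      have hle : M₀ ≤ M := by
        rw [← hr₀]
        exact IntermediateField.adjoin_le_iff.mpr (Set.singleton_subset_iff.mpr hr₀M)
      have : M₀ = M := le_antisymm hle (hM₀max hMS hle)
      rw [this]
      exact hyM


theorem aux_bound {A : Type*} {B : Type*} [CommRing A] [IsDomain A] [CommRing B] [IsDomain B]
    [Algebra A B] [Algebra.IsIntegral A B] [IsIntegrallyClosed A]
    (KA LB : Type*) [Field KA] [Field LB] [Algebra A KA] [IsFractionRing A KA]
    [Algebra B LB] [IsFractionRing B LB] [Algebra KA LB] [Algebra A LB]
    [IsScalarTower A KA LB] [IsScalarTower A B LB] (b : B) :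
    ((minpoly A b).natDegree : Cardinal) ≤ Module.rank KA LB := by
  have hbint : IsIntegral A b := Algebra.IsIntegral.isIntegral b
  set b' : LB := algebraMap B LB b with hb'
  have hmp : minpoly KA b' = (minpoly A b).map (algebraMap A KA) :=
    minpoly.isIntegrallyClosed_eq_field_fractions KA LB hbint
  have hb'int : IsIntegral KA b' := by
    refine IsIntegral.tower_top (R := A) ?_
    exact (hbint.map (IsScalarTower.toAlgHom A B LB))
  have h1 : Module.finrank KA KA⟮b'⟯ = (minpoly A b).natDegree := by
    rw [IntermediateField.adjoin.finrank hb'int, hmp,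
      (minpoly.monic hbint).natDegree_map]
  haveI : FiniteDimensional KA KA⟮b'⟯ := IntermediateField.adjoin.finiteDimensional hb'int
  calc ((minpoly A b).natDegree : Cardinal) = Module.rank KA KA⟮b'⟯ := by
        rw [← h1, Module.finrank_eq_rank]
    _ ≤ Module.rank KA LB := Submodule.rank_le (Subalgebra.toSubmodule KA⟮b'⟯.toSubalgebra)

/-- degree bound on the residue side. -/
theorem aux_deg {A₀ : Type*} {R : Type*} [CommRing A₀] [IsDomain A₀] [CommRing R] [IsDomain R]
    (K L : Type*) [Field K] [Field L] [Algebra A₀ K] [IsFractionRing A₀ K]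
    [Algebra R L] [IsFractionRing R L] [Algebra K L] [Algebra A₀ L] [Algebra A₀ R]
    [IsScalarTower A₀ K L] [IsScalarTower A₀ R L]
    (r : R) (hgen : IntermediateField.adjoin K {algebraMap R L r} = ⊤)
    (P₀ : Polynomial A₀) (hP₀ : P₀.Monic) (hzero : Polynomial.aeval r P₀ = 0) :
    Module.finrank K L ≤ P₀.natDegree := by
  set x : L := algebraMap R L r with hx
  have hann : Polynomial.aeval x (P₀.map (algebraMap A₀ K)) = 0 := by
    rw [Polynomial.aeval_map_algebraMap, hx, Polynomial.aeval_algebraMap_apply, hzero, _root_.map_zero]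
  have hxint : IsIntegral K x := ⟨P₀.map (algebraMap A₀ K), (hP₀.map _), by
    rwa [← Polynomial.aeval_def]⟩
  have hdvd : minpoly K x ∣ P₀.map (algebraMap A₀ K) := minpoly.dvd K x hann
  have hne : P₀.map (algebraMap A₀ K) ≠ 0 := (hP₀.map _).ne_zero
  have h2 : (minpoly K x).natDegree ≤ P₀.natDegree := by
    have := Polynomial.natDegree_le_of_dvd hdvd hne
    rwa [hP₀.natDegree_map] at this
  calc Module.finrank K L = Module.finrank K K⟮x⟯ := by rw [hgen, IntermediateField.finrank_top']
    _ = (minpoly K x).natDegree := IntermediateField.adjoin.finrank hxint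
    _ ≤ P₀.natDegree := h2

/-- Let `A ⊆ B` be an extension of integral domains with `B` integral over `A`
and `A` integrally closed.  Let `q` be a prime of `B` and `p = q ∩ A`.  If the residue field
`κ(q)` is generated by a single element as a field extension of `κ(p)`, then `κ(q)/κ(p)` is
finite and `[κ(q) : κ(p)] ≤ [K(B) : K(A)]` (an inequality of cardinal ranks; the right-hand
side may be infinite). -/
theorem residue_degree_le_of_adjoin_singleton
    (A : Type u) (B : Type v) [CommRing A] [IsDomain A] [CommRing B] [IsDomain B]
    [Algebra A B] (hAB : Function.Injective (algebraMap A B))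
    [Algebra.IsIntegral A B] [IsIntegrallyClosed A]
    (q : Ideal B) (hq : q.IsPrime)
    (hmono : haveI := hq; letI := residueAlgebra A q hq;
      ∃ x : FractionRing (B ⧸ q),
        IntermediateField.adjoin (FractionRing (A ⧸ q.comap (algebraMap A B))) {x} = ⊤) :
    ResidueFinite A q hq ∧
      residueRank A q hq ≤ fracRank (algebraMap A B) hAB := by
  haveI := hq
  haveI hp : (q.comap (algebraMap A B)).IsPrime := Ideal.IsPrime.comap _
  letI : Algebra (FractionRing (A ⧸ q.comap (algebraMap A B))) (FractionRing (B ⧸ q)) :=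
    residueAlgebra A q hq
  haveI t2 : IsScalarTower (A ⧸ q.comap (algebraMap A B))
      (FractionRing (A ⧸ q.comap (algebraMap A B))) (FractionRing (B ⧸ q)) :=
    IsScalarTower.of_algebraMap_eq fun x => by
      rw [IsScalarTower.algebraMap_apply (A ⧸ q.comap (algebraMap A B)) (B ⧸ q)
        (FractionRing (B ⧸ q))]
      exact (RingHom.fracMap_algebraMap (Ideal.quotientMap q (algebraMap A B) le_rfl)
        Ideal.quotientMap_injective x).symm
  obtain ⟨hfd, r, hgen⟩ := aux_gen (A₀ := A ⧸ q.comap (algebraMap A B)) (R := B ⧸ q)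
    (FractionRing (A ⧸ q.comap (algebraMap A B))) (FractionRing (B ⧸ q)) hmono
  refine ⟨hfd, ?_⟩
  -- lift the generator to `B`
  obtain ⟨b, rfl⟩ := Ideal.Quotient.mk_surjective r
  haveI t3 : IsScalarTower A (A ⧸ q.comap (algebraMap A B)) (B ⧸ q) :=
    IsScalarTower.of_algebraMap_eq fun x =>
      (Ideal.quotientMap_mk (f := algebraMap A B) (H := le_rfl) (x := x)).symm
  -- the reduced minimal polynomial
  set P : Polynomial A := minpoly A b with hP
  have hPmonic : P.Monic := minpoly.monic (Algebra.IsIntegral.isIntegral b)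
  set P₀ : Polynomial (A ⧸ q.comap (algebraMap A B)) :=
    P.map (algebraMap A (A ⧸ q.comap (algebraMap A B))) with hP₀def
  have hP₀monic : P₀.Monic := hPmonic.map _
  have hzero : Polynomial.aeval (Ideal.Quotient.mk q b) P₀ = 0 := by
    rw [hP₀def, Polynomial.aeval_map_algebraMap, ← Ideal.Quotient.algebraMap_eq,
      Polynomial.aeval_algebraMap_apply, minpoly.aeval, _root_.map_zero]
  have hdeg1 : Module.finrank (FractionRing (A ⧸ q.comap (algebraMap A B)))
      (FractionRing (B ⧸ q)) ≤ P₀.natDegree :=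
    aux_deg _ _ _ hgen P₀ hP₀monic hzero
  have hdeg1' : P₀.natDegree = P.natDegree := hPmonic.natDegree_map _
  -- the fraction-field side
  letI : Algebra (FractionRing A) (FractionRing B) := ((algebraMap A B).fracMap hAB).toAlgebra
  haveI s2 : IsScalarTower A (FractionRing A) (FractionRing B) :=
    IsScalarTower.of_algebraMap_eq fun x => by
      rw [IsScalarTower.algebraMap_apply A B (FractionRing B)]
      exact (RingHom.fracMap_algebraMap (algebraMap A B) hAB x).symm
  have hdeg2 : ((minpoly A b).natDegree : Cardinal) ≤
      Module.rank (FractionRing A) (FractionRing B) :=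
    aux_bound (FractionRing A) (FractionRing B) b
  show Module.rank (FractionRing (A ⧸ q.comap (algebraMap A B))) (FractionRing (B ⧸ q)) ≤
      Module.rank (FractionRing A) (FractionRing B)
  calc Module.rank (FractionRing (A ⧸ q.comap (algebraMap A B))) (FractionRing (B ⧸ q))
      = (Module.finrank (FractionRing (A ⧸ q.comap (algebraMap A B)))
          (FractionRing (B ⧸ q)) : Cardinal) := (Module.finrank_eq_rank _ _).symm
    _ ≤ (P.natDegree : Cardinal) := by
        exact_mod_cast Nat.cast_le.mpr (hdeg1'.symm ▸ hdeg1)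
    _ ≤ Module.rank (FractionRing A) (FractionRing B) := hdeg2


end
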